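/- Let H = ℓ²(ℕ,ℝ), let S be a countable index set, and let 𝓛 be the asymptotic filtered colimit of {(X_s,𝓛_s)}_{s∈S} on X with every X_s countable. If (X_s,𝓛_s) 1-pinch-spaces to H for every s ∈ S, then (X,𝓛) 1-pinch-spaces to H. -/

import Mathlib

open Set

/-- The star of a set `V` against a family `U`: the union of all members of `U` meeting `V`. -/
def lsStar {X : Type*} (V : Set X) (U : Set (Set X)) : Set X :=
  ⋃₀ {u ∈ U | (u ∩ V).Nonempty}

/-- The family `st(𝓥,𝓤) = {st(V,𝓤) : V ∈ 𝓥}`. -/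
def lsStarFam {X : Type*} (V U : Set (Set X)) : Set (Set X) :=
  (fun v => lsStar v U) '' V

/-- A large scale structure on the subset `A` of `X`: a nonempty collection of families of
subsets of `A` closed under (1) replacing a family by any family whose members with more than
one point refine it, and (2) stars. -/
structure IsLSS {X : Type*} (A : Set X) (L : Set (Set (Set X))) : Prop where
  nonempty : L.Nonempty
  mem_sub : ∀ U ∈ L, ∀ u ∈ U, u ⊆ A
  refine : ∀ V ∈ L, ∀ U : Set (Set X), (∀ u ∈ U, u ⊆ A) →
    (∀ u ∈ U, u.Nontrivial → ∃ v ∈ V, u ⊆ v) → U ∈ L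
  star_mem : ∀ U ∈ L, ∀ V ∈ L, lsStarFam V U ∈ L

/-- The data for an asymptotic filtered colimit: subsets `Xs s` of `X` covering `X`, each with a
large scale structure `L s`, whose restrictions to pairwise intersections coincide, and which are
directed. -/
structure AFCSetup (X S : Type*) where
  Xs : S → Set X
  L : S → Set (Set (Set X))
  lss : ∀ s, IsLSS (Xs s) (L s)
  covers : ⋃ s, Xs s = Set.univ
  compat : ∀ r s : S, ∀ U : Set (Set X), (∀ u ∈ U, u ⊆ Xs r ∩ Xs s) → (U ∈ L r ↔ U ∈ L s)
  directed : ∀ r s : S, ∃ t, Xs r ∪ Xs s ⊆ Xs t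

/-- The asymptotic filtered colimit: `𝓤` is uniformly bounded iff there are `s ∈ S` and
`𝓥 ∈ 𝓛_s` such that every member of `𝓤` with more than one point is contained in a member
of `𝓥`. -/
def AFCSetup.colim {X S : Type*} (C : AFCSetup X S) : Set (Set (Set X)) :=
  {U | ∃ s, ∃ V ∈ C.L s, ∀ u ∈ U, u.Nontrivial → ∃ v ∈ V, u ⊆ v}

/-- The space `A` with large scale structure `L` `c`-pinch-spaces to the metric space `K`:
for every uniformly bounded `𝓤` and `ε > 0` there are a uniformly bounded `𝓥` and a map
`f : A → K` with `sup_{U ∈ 𝓤} diam f(U) < ε` and `d(f x, f y) ≥ c` whenever no member of `𝓥`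
contains both `x` and `y`. -/
def PinchSpaces {X K : Type*} [MetricSpace K] (A : Set X) (L : Set (Set (Set X)))
    (c : ℝ) : Prop :=
  ∀ U ∈ L, ∀ ε : ℝ, 0 < ε → ∃ V ∈ L, ∃ f : X → K,
    (⨆ u ∈ U, EMetric.diam (f '' u)) < ENNReal.ofReal ε ∧
    ∀ x ∈ A, ∀ y ∈ A, (∀ v ∈ V, ¬(x ∈ v ∧ y ∈ v)) → c ≤ dist (f x) (f y)

noncomputable section

abbrev H2 := lp (fun _ : ℕ => ℝ) 2

def shiftFun (a : H2) : ℕ → ℝ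
  | 0 => 0
  | (n + 1) => a n

lemma two_toReal : ((2 : ENNReal)).toReal = 2 := by norm_num

lemma shift_memℓp (a : H2) : Memℓp (shiftFun a) 2 := by
  apply memℓp_gen
  have hs : Summable fun n : ℕ => ‖a n‖ ^ (2 : ENNReal).toReal :=
    (memℓp_gen_iff (by norm_num)).1 (lp.memℓp a)
  refine (Nat.succ_injective.summable_iff
    (f := fun n : ℕ => ‖shiftFun a n‖ ^ (2 : ENNReal).toReal) ?_).1 ?_
  · intro x hx
    have hx0 : x = 0 := by
      rcases x with _ | m
      · rfl
      · exact absurd ⟨m, rfl⟩ hx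
    subst hx0
    simp [shiftFun, Real.zero_rpow, two_toReal]
  · exact hs

def shiftL (a : H2) : H2 := ⟨shiftFun a, shift_memℓp a⟩

@[simp] lemma shiftL_apply_zero (a : H2) : (shiftL a : ℕ → ℝ) 0 = 0 := rfl
@[simp] lemma shiftL_apply_succ (a : H2) (n : ℕ) : (shiftL a : ℕ → ℝ) (n + 1) = a n := rfl

lemma norm_shiftL (a : H2) : ‖shiftL a‖ = ‖a‖ := by
  rw [lp.norm_eq_tsum_rpow (by norm_num) (shiftL a), lp.norm_eq_tsum_rpow (by norm_num) a]
  congr 1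
  rw [← Nat.succ_injective.tsum_eq
    (f := fun n : ℕ => ‖(shiftL a : ℕ → ℝ) n‖ ^ (2 : ENNReal).toReal)]
  · apply tsum_congr; intro n; simp
  · intro x hx
    rcases x with _ | m
    · exact absurd (Function.mem_support.1 hx)
        (by simp [shiftL, shiftFun, Real.zero_rpow, two_toReal])
    · exact ⟨m, rfl⟩

lemma shiftL_sub (a b : H2) : shiftL a - shiftL b = shiftL (a - b) := by
  apply lp.ext
  rw [lp.coeFn_sub]
  funext n
  rcases n with _ | m
  · simp
  · simp [lp.coeFn_sub]

lemma dist_shiftL (a b : H2) : dist (shiftL a) (shiftL b) = dist a b := by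
  rw [dist_eq_norm, dist_eq_norm, shiftL_sub, norm_shiftL]

lemma isometry_shiftL : Isometry shiftL := Isometry.of_dist_eq dist_shiftL

lemma coord_le_dist (f g : H2) (n : ℕ) : |(f : ℕ → ℝ) n - (g : ℕ → ℝ) n| ≤ dist f g := by
  have h := lp.norm_apply_le_norm (E := fun _ : ℕ => ℝ) (p := 2) (by norm_num) (f - g) n
  rw [lp.coeFn_sub, Pi.sub_apply, Real.norm_eq_abs] at h
  rw [dist_eq_norm]
  exact h

end

/-- with `H = ℓ²(ℕ,ℝ)`, `S` countable and every `X_s` countable, if each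
`(X_s, 𝓛_s)` 1-pinch-spaces to `H`, then the asymptotic filtered colimit `(X, 𝓛)`
1-pinch-spaces to `H`. -/
theorem stmt8 {X S : Type*} [Countable S] (C : AFCSetup X S)
    (hcnt : ∀ s, (C.Xs s).Countable)
    (h : ∀ s, PinchSpaces (K := lp (fun _ : ℕ => ℝ) 2) (C.Xs s) (C.L s) 1) :
    PinchSpaces (K := lp (fun _ : ℕ => ℝ) 2) (Set.univ : Set X) C.colim 1 := by
  classical
  -- X is countable
  have hXcnt : Countable X := by
    rw [← Set.countable_univ_iff, ← C.covers]
    exact Set.countable_iUnion hcnt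
  obtain ⟨ι, hι⟩ := Countable.exists_injective_nat X
  rintro U ⟨s, V, hV, hUV⟩ ε hε
  obtain ⟨W, hW, fs, hdiam, hsep⟩ := h s V hV ε hε
  -- the new bounded family
  refine ⟨W ∪ (Set.range fun z : X => ({z} : Set X)), ⟨s, W, hW, ?_⟩, ?_⟩
  · rintro u (hu | ⟨z, rfl⟩) hnt
    · exact ⟨u, hu, subset_rfl⟩
    · exact absurd hnt (by simp [Set.not_nontrivial_singleton])
  -- the map
  set f : X → H2 := fun x =>
    if x ∈ C.Xs s then shiftL (fs x) else lp.single 2 0 ((ι x : ℝ) + 1) with hf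
  refine ⟨f, ?_, ?_⟩
  · -- diameter bound
    refine lt_of_le_of_lt (iSup₂_le fun u hu => ?_) hdiam
    by_cases hnt : u.Nontrivial
    · obtain ⟨v, hv, huv⟩ := hUV u hu hnt
      have hvsub : v ⊆ C.Xs s := (C.lss s).mem_sub V hV v hv
      have himg : f '' u = shiftL '' (fs '' u) := by
        rw [← Set.image_comp]
        apply Set.image_congr
        intro x hx
        simp only [f, Function.comp_apply, if_pos (hvsub (huv hx))]
      rw [himg]; refine (isometry_shiftL.ediam_image _).le.trans ?_
      exact le_trans (EMetric.diam_mono (Set.image_mono huv)) (le_iSup₂ (f := fun v _ =>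
        EMetric.diam (fs '' v)) v hv)
    · have : u.Subsingleton := Set.not_nontrivial_iff.1 hnt
      have : (f '' u).Subsingleton := this.image f
      exact (Metric.ediam_subsingleton this).le.trans (zero_le')
  · -- separation
    intro x _ y _ hxy
    have hne : x ≠ y := by
      intro hxyeq
      exact hxy {x} (Or.inr ⟨x, rfl⟩) ⟨rfl, by simp [hxyeq]⟩
    by_cases hx : x ∈ C.Xs s <;> by_cases hy : y ∈ C.Xs s
    · -- both in Xs s : use the pinch separation
      have h1 : (1 : ℝ) ≤ dist (fs x) (fs y) :=
        hsep x hx y hy (fun v hv => hxy v (Or.inl hv))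
      calc (1 : ℝ) ≤ dist (fs x) (fs y) := h1
        _ = dist (f x) (f y) := by
            rw [hf]; simp only [if_pos hx, if_pos hy, dist_shiftL]
    · -- x in, y out: compare coordinate 0
      have hc : |(f x : ℕ → ℝ) 0 - (f y : ℕ → ℝ) 0| ≤ dist (f x) (f y) :=
        coord_le_dist (f x) (f y) 0
      have h0 : (f x : ℕ → ℝ) 0 = 0 := by rw [hf]; simp only [if_pos hx]; rfl
      have h1 : (f y : ℕ → ℝ) 0 = (ι y : ℝ) + 1 := by
        rw [hf]; simp only [if_neg hy]
        exact lp.single_apply_self 2 0 _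
      refine le_trans ?_ hc
      rw [h0, h1]
      rw [abs_sub_comm, sub_zero, abs_of_nonneg (by positivity)]
      linarith [Nat.cast_nonneg (α := ℝ) (ι y)]
    · -- y in, x out
      have hc : |(f x : ℕ → ℝ) 0 - (f y : ℕ → ℝ) 0| ≤ dist (f x) (f y) :=
        coord_le_dist (f x) (f y) 0
      have h0 : (f y : ℕ → ℝ) 0 = 0 := by rw [hf]; simp only [if_pos hy]; rfl
      have h1 : (f x : ℕ → ℝ) 0 = (ι x : ℝ) + 1 := by
        rw [hf]; simp only [if_neg hx]
        exact lp.single_apply_self 2 0 _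
      refine le_trans ?_ hc
      rw [h0, h1, sub_zero, abs_of_nonneg (by positivity)]
      linarith [Nat.cast_nonneg (α := ℝ) (ι x)]
    · -- both out
      have hc : |(f x : ℕ → ℝ) 0 - (f y : ℕ → ℝ) 0| ≤ dist (f x) (f y) :=
        coord_le_dist (f x) (f y) 0
      have h1 : (f x : ℕ → ℝ) 0 = (ι x : ℝ) + 1 := by
        rw [hf]; simp only [if_neg hx]
        exact lp.single_apply_self 2 0 _
      have h2 : (f y : ℕ → ℝ) 0 = (ι y : ℝ) + 1 := by
        rw [hf]; simp only [if_neg hy]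
        exact lp.single_apply_self 2 0 _
      refine le_trans ?_ hc
      rw [h1, h2]
      have hιne : ι x ≠ ι y := fun hh => hne (hι hh)
      have : (1 : ℝ) ≤ |(ι x : ℝ) - (ι y : ℝ)| := by
        rcases lt_or_gt_of_ne hιne with hlt | hlt
        · rw [abs_sub_comm, abs_of_nonneg (sub_nonneg.2 (by exact_mod_cast hlt.le))]
          have : (ι x : ℝ) + 1 ≤ ι y := by exact_mod_cast Nat.succ_le_of_lt hlt
          linarith
        · rw [abs_of_nonneg (sub_nonneg.2 (by exact_mod_cast hlt.le))]
          have : (ι y : ℝ) + 1 ≤ ι x := by exact_mod_cast Nat.succ_le_of_lt hlt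
          linarith
      calc (1:ℝ) ≤ |(ι x : ℝ) - ι y| := this
        _ = |(ι x : ℝ) + 1 - ((ι y : ℝ) + 1)| := by ring_nf
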